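/- If f₀(x) = exp{−w₀ ℓ(θ₀, x)} is a probability density for some w₀ > 0, and the regularity conditions permitting differentiation under the integral hold, then J(θ₀) = w₀ I(θ₀), where I(θ) = ∫ ∇ℓ(θ,x) ∇ℓ(θ,x)ᵀ f₀(x) dx and J(θ) = ∫ ∇²ℓ(θ,x) f₀(x) dx; consequently tr(J I⁻¹ Jᵀ)/tr(J) = w₀ (assuming I(θ₀) is invertible and tr(J(θ₀)) ≠ 0). -/

import Mathlib

open MeasureTheory Matrix

/-- `i`-th partial derivative with respect to the parameter `θ ∈ ℝ^d`. -/
noncomputable def pder {d : ℕ} (i : Fin d) (h : (Fin d → ℝ) → ℝ) (θ : Fin d → ℝ) : ℝ :=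
  fderiv ℝ h θ (Pi.single i 1)

lemma pder_exp_neg {d : ℕ} (f : (Fin d → ℝ) → ℝ) (θ : Fin d → ℝ)
    (hf : DifferentiableAt ℝ f θ) (w : ℝ) (i : Fin d) :
    pder i (fun θ => Real.exp (-(w * f θ))) θ
      = -w * pder i f θ * Real.exp (-(w * f θ)) := by
  unfold pder
  have h : HasFDerivAt (fun θ => -(w * f θ)) (-(w • fderiv ℝ f θ)) θ := by
    have := (hf.hasFDerivAt.const_mul w).neg; exact this
  have h2 := h.exp
  rw [h2.fderiv]
  simp
  ring

lemma pder_mul {d : ℕ} (u v : (Fin d → ℝ) → ℝ) (θ : Fin d → ℝ)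
    (hu : DifferentiableAt ℝ u θ) (hv : DifferentiableAt ℝ v θ) (i : Fin d) :
    pder i (fun θ => u θ * v θ) θ = pder i u θ * v θ + u θ * pder i v θ := by
  unfold pder
  rw [fderiv_fun_mul hu hv]
  simp
  ring

lemma pder_const_mul {d : ℕ} (c : ℝ) (g : (Fin d → ℝ) → ℝ) (θ : Fin d → ℝ)
    (hg : DifferentiableAt ℝ g θ) (i : Fin d) :
    pder i (fun θ => c * g θ) θ = c * pder i g θ := by
  unfold pder
  rw [fderiv_const_mul hg c]
  simp

/-- **Lemma 2 of the paper.** If the data density is the tempered loss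
`f₀(x) = exp{−w₀ ℓ(θ₀,x)}` and differentiation under the integral sign is valid, then
`J(θ₀) = w₀ I(θ₀)`, and consequently the information-matching calibration
`tr(J I⁻¹ Jᵀ)/tr(J)` equals `w₀` (when `I(θ₀)` is invertible and `tr J(θ₀) ≠ 0`). -/
theorem tempered_loss_calibration (d : ℕ) {Ω : Type*} [MeasurableSpace Ω] (μ : Measure Ω)
    (ℓ : (Fin d → ℝ) → Ω → ℝ) (θ₀ : Fin d → ℝ) (w₀ : ℝ) (hw₀ : 0 < w₀)
    (hC2 : ∀ x, ContDiff ℝ 2 (fun θ => ℓ θ x))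
    (hdens : (∫ x, Real.exp (-(w₀ * ℓ θ₀ x)) ∂μ) = 1)
    (hexch1 : ∀ i, (∫ x, pder i (fun θ => Real.exp (-(w₀ * ℓ θ x))) θ₀ ∂μ) = 0)
    (hexch2 : ∀ i j,
      (∫ x, pder i (fun θ => pder j (fun θ' => Real.exp (-(w₀ * ℓ θ' x))) θ) θ₀ ∂μ) = 0)
    (Imat Jmat : Matrix (Fin d) (Fin d) ℝ)
    (hImat : Imat = Matrix.of fun i j =>
      ∫ x, pder i (fun θ => ℓ θ x) θ₀ * pder j (fun θ => ℓ θ x) θ₀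
          * Real.exp (-(w₀ * ℓ θ₀ x)) ∂μ)
    (hJmat : Jmat = Matrix.of fun i j =>
      ∫ x, pder i (fun θ => pder j (fun θ' => ℓ θ' x) θ) θ₀
          * Real.exp (-(w₀ * ℓ θ₀ x)) ∂μ)
    (hintI : ∀ i j, Integrable (fun x =>
      pder i (fun θ => ℓ θ x) θ₀ * pder j (fun θ => ℓ θ x) θ₀
        * Real.exp (-(w₀ * ℓ θ₀ x))) μ)
    (hintJ : ∀ i j, Integrable (fun x =>
      pder i (fun θ => pder j (fun θ' => ℓ θ' x) θ) θ₀
        * Real.exp (-(w₀ * ℓ θ₀ x))) μ) :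
    Jmat = w₀ • Imat
    ∧ (IsUnit Imat.det → Jmat.trace ≠ 0 →
        (Jmat * Imat⁻¹ * Jmatᵀ).trace / Jmat.trace = w₀) := by
  have hw : w₀ ≠ 0 := ne_of_gt hw₀
  -- pointwise identity for the second exchanged derivative
  have key : ∀ (i j : Fin d) (x : Ω),
      pder i (fun θ => pder j (fun θ' => Real.exp (-(w₀ * ℓ θ' x))) θ) θ₀
      = w₀ ^ 2 * (pder i (fun θ => ℓ θ x) θ₀ * pder j (fun θ => ℓ θ x) θ₀
            * Real.exp (-(w₀ * ℓ θ₀ x)))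
        - w₀ * (pder i (fun θ => pder j (fun θ' => ℓ θ' x) θ) θ₀
            * Real.exp (-(w₀ * ℓ θ₀ x))) := by
    intro i j x
    set L : (Fin d → ℝ) → ℝ := fun θ => ℓ θ x with hLdef
    have hL : ContDiff ℝ 2 L := hC2 x
    have hLd : Differentiable ℝ L := hL.differentiable (by norm_num)
    have hDj : ContDiff ℝ 1 (fun θ => pder j L θ) := by
      have h1 : ContDiff ℝ 1 (fderiv ℝ L) := hL.fderiv_right (by norm_num)
      exact h1.clm_apply contDiff_const
    have hDjd : Differentiable ℝ (fun θ => pder j L θ) := hDj.differentiable (by norm_num)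
    have step1 : (fun θ => pder j (fun θ' => Real.exp (-(w₀ * L θ'))) θ)
        = fun θ => (-w₀ * pder j L θ) * Real.exp (-(w₀ * L θ)) := by
      funext θ
      exact pder_exp_neg L θ (hLd θ) w₀ j
    have hEd : Differentiable ℝ (fun θ => Real.exp (-(w₀ * L θ))) :=
      Real.differentiable_exp.comp ((hLd.const_mul w₀).neg)
    rw [step1,
      pder_mul _ _ _ (((hDjd θ₀).const_mul (-w₀))) (hEd θ₀) i,
      pder_const_mul (-w₀) _ _ (hDjd θ₀) i,
      pder_exp_neg L θ₀ (hLd θ₀) w₀ i]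
    ring
  -- entrywise relation J = w₀ I
  have hJI : Jmat = w₀ • Imat := by
    rw [hImat, hJmat]
    ext i j
    simp only [Matrix.smul_apply, Matrix.of_apply, smul_eq_mul]
    have h0 := hexch2 i j
    simp only [key i j] at h0
    rw [integral_sub ((hintI i j).const_mul (w₀ ^ 2)) ((hintJ i j).const_mul w₀),
      integral_const_mul, integral_const_mul] at h0
    have h1 : w₀ * (∫ x, pder i (fun θ => pder j (fun θ' => ℓ θ' x) θ) θ₀
        * Real.exp (-(w₀ * ℓ θ₀ x)) ∂μ)
        = w₀ * (w₀ * ∫ x, pder i (fun θ => ℓ θ x) θ₀ * pder j (fun θ => ℓ θ x) θ₀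
            * Real.exp (-(w₀ * ℓ θ₀ x)) ∂μ) := by linarith [h0, sq_nonneg w₀]
    exact mul_left_cancel₀ hw (by linarith [h1])
  refine ⟨hJI, ?_⟩
  intro hU hT
  have hsym : Imatᵀ = Imat := by
    rw [hImat]
    ext i j
    simp only [Matrix.transpose_apply, Matrix.of_apply]
    congr 1
    funext x
    ring
  have hinv : Imat * Imat⁻¹ = 1 := Matrix.mul_nonsing_inv _ hU
  have hmul : Jmat * Imat⁻¹ * Jmatᵀ = (w₀ ^ 2) • Imat := by
    rw [hJI, Matrix.transpose_smul, hsym, Matrix.smul_mul, Matrix.smul_mul,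
      Matrix.mul_smul, hinv, Matrix.one_mul, smul_smul]
    ring_nf
  have htrJ : Jmat.trace = w₀ * Imat.trace := by
    rw [hJI, Matrix.trace_smul]; simp
  rw [htrJ] at hT
  rw [hmul, Matrix.trace_smul, htrJ, smul_eq_mul, div_eq_iff hT]
  ring
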